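/- Let m be a positive odd integer, ζ = exp(2πi/(2m)), and 2 ≤ j ≤ (m-1)/2 with j even. Then ζ^{j-1} + ζ^{j-3} + ⋯ + ζ^{-(j-1)} ≠ ζ^{(j-1)(m-2)} + ζ^{(j-3)(m-2)} + ⋯ + ζ^{-(j-1)(m-2)}. -/

import Mathlib

open Real Finset

lemma key_sum (θ : ℝ) (j : ℕ) :
    Real.sin θ * ∑ k ∈ Finset.range j, Real.cos (((j : ℝ) - 1 - 2 * k) * θ)
      = Real.sin (j * θ) := by
  have h := Finset.sum_range_sub' (f := fun k : ℕ => Real.sin (((j : ℝ) - 2 * k) * θ) / 2) j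
  rw [Finset.mul_sum]
  have hterm : ∀ k ∈ Finset.range j,
      Real.sin θ * Real.cos (((j : ℝ) - 1 - 2 * k) * θ)
        = Real.sin (((j : ℝ) - 2 * (k : ℕ)) * θ) / 2
          - Real.sin (((j : ℝ) - 2 * ((k + 1 : ℕ) : ℕ)) * θ) / 2 := by
    intro k _
    have hs := Real.sin_sub_sin (((j : ℝ) - 2 * k) * θ) (((j : ℝ) - 2 * ((k : ℝ) + 1)) * θ)
    have e1 : (((j : ℝ) - 2 * k) * θ - ((j : ℝ) - 2 * ((k : ℝ) + 1)) * θ) / 2 = θ := by ring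
    have e2 : (((j : ℝ) - 2 * k) * θ + ((j : ℝ) - 2 * ((k : ℝ) + 1)) * θ) / 2
        = ((j : ℝ) - 1 - 2 * k) * θ := by ring
    rw [e1, e2] at hs
    push_cast
    linarith
  rw [Finset.sum_congr rfl hterm, h]
  simp only [Nat.cast_zero, mul_zero, sub_zero]
  have e : ((j : ℝ) - 2 * j) * θ = -(j * θ) := by ring
  rw [e, Real.sin_neg]
  ring

lemma zpow_re (θ : ℝ) (t : ℤ) :
    ((Complex.exp ((θ : ℂ) * Complex.I)) ^ t).re = Real.cos (t * θ) := by
  rw [← Complex.exp_int_mul]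
  have e : (t : ℂ) * ((θ : ℂ) * Complex.I) = ((t * θ : ℝ) : ℂ) * Complex.I := by push_cast; ring
  rw [e, Complex.exp_ofReal_mul_I_re]

theorem galois_moves_quantum_integer (m j : ℕ) (hodd : Odd m) (hj2 : 2 ≤ j)
    (hjm : j ≤ (m - 1) / 2) (hje : Even j)
    (ζ : ℂ) (hζ : ζ = Complex.exp (2 * Real.pi * Complex.I / (2 * m))) :
    ∑ k ∈ Finset.range j, ζ ^ ((j : ℤ) - 1 - 2 * k) ≠
      ∑ k ∈ Finset.range j, ζ ^ (((j : ℤ) - 1 - 2 * k) * ((m : ℤ) - 2)) := by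
  obtain ⟨c, hc⟩ := hodd
  have hm5 : 5 ≤ m := by omega
  have h2j : 2 * j ≤ m - 1 := by omega
  have hmr : (5 : ℝ) ≤ m := by exact_mod_cast hm5
  have hm0 : (0 : ℝ) < m := by linarith
  set θ : ℝ := π / m with hθ
  have hζ' : ζ = Complex.exp ((θ : ℂ) * Complex.I) := by
    rw [hζ]; congr 1
    rw [hθ]
    have hm0' : (m : ℂ) ≠ 0 := by
      exact_mod_cast (by positivity : (m : ℝ) ≠ 0)
    push_cast
    field_simp
  intro heq
  have hre := congrArg Complex.re heq
  rw [hζ'] at hre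
  simp only [Complex.re_sum, zpow_re] at hre
  have hA : ∑ k ∈ Finset.range j, Real.cos ((((j : ℤ) - 1 - 2 * k : ℤ) : ℝ) * θ)
      = ∑ k ∈ Finset.range j, Real.cos (((j : ℝ) - 1 - 2 * k) * θ) := by
    apply Finset.sum_congr rfl; intro k _; congr 1; push_cast; ring
  have hB : ∑ k ∈ Finset.range j, Real.cos (((((j : ℤ) - 1 - 2 * k) * ((m : ℤ) - 2) : ℤ) : ℝ) * θ)
      = ∑ k ∈ Finset.range j, Real.cos (((j : ℝ) - 1 - 2 * k) * (((m : ℝ) - 2) * θ)) := by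
    apply Finset.sum_congr rfl; intro k _; congr 1; push_cast; ring
  rw [hA, hB] at hre
  have k1 := key_sum θ j
  have k2 := key_sum (((m : ℝ) - 2) * θ) j
  have hπ := Real.pi_pos
  have hθpos : 0 < θ := by rw [hθ]; positivity
  have hs1 : 0 < Real.sin θ := by
    apply Real.sin_pos_of_pos_of_lt_pi hθpos
    rw [hθ, div_lt_iff₀ hm0]
    nlinarith
  have hjr : (0 : ℝ) < j := by exact_mod_cast (by omega : 0 < j)
  have h2jr : 2 * (j : ℝ) ≤ (m : ℝ) - 1 := by
    have : (2 * j : ℕ) ≤ (m - 1 : ℕ) := h2j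
    have h' : ((2 * j : ℕ) : ℝ) ≤ ((m - 1 : ℕ) : ℝ) := by exact_mod_cast this
    push_cast [Nat.cast_sub (by omega : 1 ≤ m)] at h'
    linarith
  have hs2 : 0 < Real.sin ((j : ℝ) * θ) := by
    apply Real.sin_pos_of_pos_of_lt_pi (by positivity)
    rw [hθ]
    rw [mul_div_assoc', div_lt_iff₀ hm0]
    nlinarith
  -- sin θ' > 0 where θ' = (m-2)θ = π - 2π/m
  have hθ'eq : ((m : ℝ) - 2) * θ = π - 2 * π / m := by
    rw [hθ]; field_simp
  have hs3 : 0 < Real.sin (((m : ℝ) - 2) * θ) := by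
    rw [hθ'eq, Real.sin_pi_sub]
    apply Real.sin_pos_of_pos_of_lt_pi (by positivity)
    rw [div_lt_iff₀ hm0]
    nlinarith
  -- sin (j θ') = - sin (2jπ/m) < 0
  obtain ⟨d, hd⟩ := hje
  have hangle : (j : ℝ) * (((m : ℝ) - 2) * θ) = (d : ℝ) * (2 * π) - 2 * j * π / m := by
    rw [hθ]
    have hjd : (j : ℝ) = 2 * d := by
      have : j = 2 * d := by omega
      exact_mod_cast this
    field_simp [hjd]
    rw [hjd]; ring
  have hs4 : Real.sin ((j : ℝ) * (((m : ℝ) - 2) * θ)) = -Real.sin (2 * j * π / m) := by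
    rw [hangle, Real.sin_sub]
    have e1 : (d : ℝ) * (2 * π) = ((2 * d : ℕ) : ℝ) * π := by push_cast; ring
    rw [e1, Real.sin_nat_mul_pi]
    have e2 : ((2 * d : ℕ) : ℝ) * π = (d : ℝ) * (2 * π) := by push_cast; ring
    rw [e2, Real.cos_nat_mul_two_pi]
    ring
  have hs5 : 0 < Real.sin (2 * j * π / m) := by
    apply Real.sin_pos_of_pos_of_lt_pi (by positivity)
    rw [div_lt_iff₀ hm0]
    nlinarith
  have e : Real.sin (((m : ℝ) - 2) * θ) * Real.sin ((j : ℝ) * θ)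
      = Real.sin θ * Real.sin ((j : ℝ) * (((m : ℝ) - 2) * θ)) := by
    calc Real.sin (((m : ℝ) - 2) * θ) * Real.sin ((j : ℝ) * θ)
        = Real.sin (((m : ℝ) - 2) * θ)
          * (Real.sin θ * ∑ k ∈ Finset.range j, Real.cos (((j : ℝ) - 1 - 2 * k) * θ)) := by
          rw [k1]
      _ = Real.sin θ * (Real.sin (((m : ℝ) - 2) * θ)
          * ∑ k ∈ Finset.range j, Real.cos (((j : ℝ) - 1 - 2 * k) * (((m : ℝ) - 2) * θ))) := by
          rw [hre]; ring
      _ = Real.sin θ * Real.sin ((j : ℝ) * (((m : ℝ) - 2) * θ)) := by rw [k2]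
  rw [hs4] at e
  nlinarith [mul_pos hs3 hs2, mul_pos hs1 hs5]
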